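/- Let Y be a finite set and let Q0 and Q* be probability distributions on Y, both with full support. For λ ∈ [0,1] define Q_λ(y) = Q0(y)^{1−λ} Q*(y)^{λ} / Σ_{y'} Q0(y')^{1−λ} Q*(y')^{λ}. Then as λ ↓ 0: (i) D(Q_λ ‖ Q0) = (λ²/2) · var_{Q0}( log( Q0(Y)/Q*(Y) ) ) + o(λ²), and (ii) the derivative of λ ↦ D(Q_λ ‖ Q*) at λ = 0 equals −var_{Q0}( log( Q0(Y)/Q*(Y) ) ). -/

import Mathlib

/-!
STATEMENT 16: For full-support distributions `Q0`, `Q*` on a finite set and the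
normalized geometric mixture `Q_λ`, as `λ ↓ 0`:
(i) `D(Q_λ ‖ Q0) = (λ²/2) var_{Q0}(log(Q0(Y)/Q*(Y))) + o(λ²)`, and
(ii) the derivative at `λ = 0` of `λ ↦ D(Q_λ ‖ Q*)` equals `−var_{Q0}(log(Q0(Y)/Q*(Y)))`.
-/

open Filter Asymptotics
open scoped BigOperators Topology

/-- `p` is a probability mass function on a finite type. -/
def IsDist {α : Type*} [Fintype α] (p : α → ℝ) : Prop :=
  (∀ a, 0 ≤ p a) ∧ ∑ a, p a = 1

/-- Relative entropy (in nats) between pmfs on a finite type. -/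
noncomputable def relEnt {α : Type*} [Fintype α] (p q : α → ℝ) : ℝ :=
  ∑ a, p a * Real.log (p a / q a)

/-- The normalized geometric mixture of two distributions. -/
noncomputable def geomMix {α : Type*} [Fintype α] (q0 qs : α → ℝ) (lam : ℝ) : α → ℝ :=
  fun a => q0 a ^ (1 - lam) * qs a ^ lam / ∑ a', q0 a' ^ (1 - lam) * qs a' ^ lam

/-- Variance of the function `f` of `Y` when `Y` has distribution `q` on a finite set. -/
noncomputable def varFin {α : Type*} [Fintype α] (q f : α → ℝ) : ℝ :=
  ∑ a, q a * (f a - ∑ a', q a' * f a') ^ 2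

section Aux

set_option linter.unusedSectionVars false

/-- derivative of a finite sum of exponentials -/
lemma sumExp_hasDerivAt {Y : Type*} [Fintype Y] (c g : Y → ℝ) (x : ℝ) :
    HasDerivAt (fun t => ∑ y, c y * Real.exp (-(t * g y)))
      (-(∑ y, c y * g y * Real.exp (-(x * g y)))) x := by
  have h : ∀ y : Y, HasDerivAt (fun t : ℝ => c y * Real.exp (-(t * g y)))
      (-(c y * g y * Real.exp (-(x * g y)))) x := by
    intro y
    have h1 : HasDerivAt (fun t : ℝ => -(t * g y)) (-(g y)) x :=
      ((hasDerivAt_id x).mul_const (g y)).neg.congr_deriv (by ring)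
    have := (h1.exp).const_mul (c y)
    exact this.congr_deriv (by ring)
  have h2 := HasDerivAt.fun_sum (u := Finset.univ) (fun y _ => h y)
  exact h2.congr_deriv (by rw [Finset.sum_neg_distrib])

variable {Y : Type*} [Fintype Y] (Q0 Qs : Y → ℝ)

/-- The normalizing constant of the exponential tilt. -/
noncomputable def auxA (t : ℝ) : ℝ :=
  ∑ y, Q0 y * Real.exp (-(t * Real.log (Q0 y / Qs y)))

/-- First-moment sum. -/
noncomputable def auxB (t : ℝ) : ℝ :=
  ∑ y, Q0 y * Real.log (Q0 y / Qs y) * Real.exp (-(t * Real.log (Q0 y / Qs y)))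

/-- Second-moment sum. -/
noncomputable def auxC (t : ℝ) : ℝ :=
  ∑ y, Q0 y * Real.log (Q0 y / Qs y) ^ 2 * Real.exp (-(t * Real.log (Q0 y / Qs y)))

/-- The variance of the tilted measure. -/
noncomputable def auxD (t : ℝ) : ℝ :=
  (auxC Q0 Qs t * auxA Q0 Qs t - auxB Q0 Qs t ^ 2) / auxA Q0 Qs t ^ 2

lemma auxA_pos (hQ0pos : ∀ y, 0 < Q0 y) (hne : Nonempty Y) (t : ℝ) :
    0 < auxA Q0 Qs t :=
  Finset.sum_pos (fun y _ => mul_pos (hQ0pos y) (Real.exp_pos _)) Finset.univ_nonempty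

lemma auxA_zero (h : ∑ y, Q0 y = 1) : auxA Q0 Qs 0 = 1 := by
  simp only [auxA, zero_mul, neg_zero, Real.exp_zero, mul_one]
  exact h

lemma auxB_zero : auxB Q0 Qs 0 = ∑ y, Q0 y * Real.log (Q0 y / Qs y) := by
  simp [auxB]

lemma auxC_zero : auxC Q0 Qs 0 = ∑ y, Q0 y * Real.log (Q0 y / Qs y) ^ 2 := by
  simp [auxC]

lemma auxA_hasDerivAt (t : ℝ) : HasDerivAt (auxA Q0 Qs) (-(auxB Q0 Qs t)) t :=
  sumExp_hasDerivAt Q0 (fun y => Real.log (Q0 y / Qs y)) t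

lemma auxB_hasDerivAt (t : ℝ) : HasDerivAt (auxB Q0 Qs) (-(auxC Q0 Qs t)) t := by
  have := sumExp_hasDerivAt (fun y => Q0 y * Real.log (Q0 y / Qs y))
    (fun y => Real.log (Q0 y / Qs y)) t
  exact this.congr_deriv (by unfold auxC; rw [neg_inj]; exact Finset.sum_congr rfl fun y _ => by ring)

lemma auxC_hasDerivAt (t : ℝ) :
    HasDerivAt (auxC Q0 Qs) (-(∑ y, Q0 y * Real.log (Q0 y / Qs y) ^ 3 *
      Real.exp (-(t * Real.log (Q0 y / Qs y))))) t := by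
  have := sumExp_hasDerivAt (fun y => Q0 y * Real.log (Q0 y / Qs y) ^ 2)
    (fun y => Real.log (Q0 y / Qs y)) t
  exact this.congr_deriv (by rw [neg_inj]; exact Finset.sum_congr rfl fun y _ => by ring)

lemma auxBA_hasDerivAt (hQ0pos : ∀ y, 0 < Q0 y) (hne : Nonempty Y) (t : ℝ) :
    HasDerivAt (fun s => auxB Q0 Qs s / auxA Q0 Qs s) (-(auxD Q0 Qs t)) t := by
  have h := (auxB_hasDerivAt Q0 Qs t).div (auxA_hasDerivAt Q0 Qs t)
    (auxA_pos Q0 Qs hQ0pos hne t).ne'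
  exact h.congr_deriv (by unfold auxD; ring)

lemma auxD_continuousAt (hQ0pos : ∀ y, 0 < Q0 y) (hne : Nonempty Y) :
    ContinuousAt (auxD Q0 Qs) 0 := by
  have hA := (auxA_hasDerivAt Q0 Qs 0).continuousAt
  have hB := (auxB_hasDerivAt Q0 Qs 0).continuousAt
  have hC := (auxC_hasDerivAt Q0 Qs 0).continuousAt
  exact ((hC.mul hA).sub (hB.pow 2)).div (hA.pow 2)
    (pow_ne_zero 2 (auxA_pos Q0 Qs hQ0pos hne 0).ne')

lemma varFin_eq_auxD (hQ0pos : ∀ y, 0 < Q0 y) (h1 : ∑ y, Q0 y = 1) :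
    varFin Q0 (fun y => Real.log (Q0 y / Qs y)) = auxD Q0 Qs 0 := by
  unfold auxD
  rw [auxA_zero Q0 Qs h1, auxB_zero, auxC_zero]
  set μ : ℝ := ∑ y, Q0 y * Real.log (Q0 y / Qs y) with hμ
  unfold varFin
  rw [← hμ]
  have expand : ∀ y : Y, Q0 y * (Real.log (Q0 y / Qs y) - μ) ^ 2
      = Q0 y * Real.log (Q0 y / Qs y) ^ 2 - 2 * μ * (Q0 y * Real.log (Q0 y / Qs y))
        + μ ^ 2 * Q0 y := fun y => by ring
  rw [Finset.sum_congr rfl fun y _ => expand y, Finset.sum_add_distrib,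
    Finset.sum_sub_distrib, ← Finset.mul_sum, ← Finset.mul_sum, ← hμ, h1]
  ring

lemma pow_eq_exp (hQ0pos : ∀ y, 0 < Q0 y) (hQspos : ∀ y, 0 < Qs y) (lam : ℝ) (y : Y) :
    Q0 y ^ (1 - lam) * Qs y ^ lam
      = Q0 y * Real.exp (-(lam * Real.log (Q0 y / Qs y))) := by
  rw [Real.rpow_def_of_pos (hQ0pos y), Real.rpow_def_of_pos (hQspos y), ← Real.exp_add]
  rw [show Q0 y * Real.exp (-(lam * Real.log (Q0 y / Qs y)))
      = Real.exp (Real.log (Q0 y) + -(lam * Real.log (Q0 y / Qs y))) from by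
    rw [Real.exp_add, Real.exp_log (hQ0pos y)]]
  congr 1
  rw [Real.log_div (hQ0pos y).ne' (hQspos y).ne']
  ring

lemma geomMix_eq (hQ0pos : ∀ y, 0 < Q0 y) (hQspos : ∀ y, 0 < Qs y) (lam : ℝ) :
    geomMix Q0 Qs lam = fun y => Q0 y * Real.exp (-(lam * Real.log (Q0 y / Qs y))) /
      auxA Q0 Qs lam := by
  funext y
  simp only [geomMix, auxA]
  rw [pow_eq_exp Q0 Qs hQ0pos hQspos]
  congr 1
  exact Finset.sum_congr rfl fun y' _ => pow_eq_exp Q0 Qs hQ0pos hQspos lam y'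

lemma relEnt_geomMix_Q0
    (hQ0pos : ∀ y, 0 < Q0 y) (hQspos : ∀ y, 0 < Qs y) (hne : Nonempty Y) (lam : ℝ) :
    relEnt (geomMix Q0 Qs lam) Q0
      = -(lam * (auxB Q0 Qs lam / auxA Q0 Qs lam)) - Real.log (auxA Q0 Qs lam) := by
  have hApos := auxA_pos Q0 Qs hQ0pos hne lam
  rw [geomMix_eq Q0 Qs hQ0pos hQspos lam]
  unfold relEnt auxA auxB
  set f : Y → ℝ := fun y => Real.log (Q0 y / Qs y) with hf
  set A : ℝ := ∑ y, Q0 y * Real.exp (-(lam * f y)) with hA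
  have hApos' : 0 < A := by
    rw [hA]; exact hApos
  have hstep : ∀ y : Y,
      (Q0 y * Real.exp (-(lam * f y)) / A) *
        Real.log ((Q0 y * Real.exp (-(lam * f y)) / A) / Q0 y)
      = (-lam / A) * (Q0 y * f y * Real.exp (-(lam * f y)))
        + (-(Real.log A) / A) * (Q0 y * Real.exp (-(lam * f y))) := by
    intro y
    have h1 : (Q0 y * Real.exp (-(lam * f y)) / A) / Q0 y
        = Real.exp (-(lam * f y)) / A := by
      rw [eq_div_iff hApos'.ne', div_div, div_mul_eq_mul_div, div_eq_iff
        (mul_ne_zero hApos'.ne' (hQ0pos y).ne')]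
      ring
    rw [h1, Real.log_div (Real.exp_ne_zero _) hApos'.ne', Real.log_exp]
    ring
  rw [Finset.sum_congr rfl (fun y _ => hstep y), Finset.sum_add_distrib,
    ← Finset.mul_sum, ← Finset.mul_sum, ← hA]
  field_simp
  ring

lemma relEnt_geomMix_Qs
    (hQ0pos : ∀ y, 0 < Q0 y) (hQspos : ∀ y, 0 < Qs y) (hne : Nonempty Y) (lam : ℝ) :
    relEnt (geomMix Q0 Qs lam) Qs
      = (1 - lam) * (auxB Q0 Qs lam / auxA Q0 Qs lam) - Real.log (auxA Q0 Qs lam) := by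
  have hApos := auxA_pos Q0 Qs hQ0pos hne lam
  rw [geomMix_eq Q0 Qs hQ0pos hQspos lam]
  unfold relEnt auxA auxB
  set f : Y → ℝ := fun y => Real.log (Q0 y / Qs y) with hf
  set A : ℝ := ∑ y, Q0 y * Real.exp (-(lam * f y)) with hA
  have hApos' : 0 < A := by
    rw [hA]; exact hApos
  have hstep : ∀ y : Y,
      (Q0 y * Real.exp (-(lam * f y)) / A) *
        Real.log ((Q0 y * Real.exp (-(lam * f y)) / A) / Qs y)
      = ((1 - lam) / A) * (Q0 y * f y * Real.exp (-(lam * f y)))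
        + (-(Real.log A) / A) * (Q0 y * Real.exp (-(lam * f y))) := by
    intro y
    have h1 : (Q0 y * Real.exp (-(lam * f y)) / A) / Qs y
        = (Q0 y / Qs y) * (Real.exp (-(lam * f y)) / A) := by
      field_simp
    have h2 : (0:ℝ) < Q0 y / Qs y := div_pos (hQ0pos y) (hQspos y)
    rw [h1, Real.log_mul h2.ne' (by positivity),
      Real.log_div (Real.exp_ne_zero _) hApos'.ne', Real.log_exp]
    have hfy : Real.log (Q0 y / Qs y) = f y := rfl
    rw [hfy]
    ring
  rw [Finset.sum_congr rfl (fun y _ => hstep y), Finset.sum_add_distrib,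
    ← Finset.mul_sum, ← Finset.mul_sum, ← hA]
  field_simp
  ring

end Aux

theorem statement16 {Y : Type*} [Fintype Y]
    (Q0 Qs : Y → ℝ) (hQ0 : IsDist Q0) (hQs : IsDist Qs)
    (hQ0pos : ∀ y, 0 < Q0 y) (hQspos : ∀ y, 0 < Qs y) :
    ((fun lam : ℝ => relEnt (geomMix Q0 Qs lam) Q0 -
        lam ^ 2 / 2 * varFin Q0 (fun y => Real.log (Q0 y / Qs y)))
      =o[nhdsWithin 0 (Set.Ioi 0)] fun lam : ℝ => lam ^ 2) ∧
    HasDerivWithinAt (fun lam : ℝ => relEnt (geomMix Q0 Qs lam) Qs)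
      (-varFin Q0 (fun y => Real.log (Q0 y / Qs y))) (Set.Ici 0) 0 := by
  have hne : Nonempty Y := by
    by_contra h
    rw [not_nonempty_iff] at h
    have := hQ0.2
    simp [Finset.univ_eq_empty] at this
  have hApos := auxA_pos Q0 Qs hQ0pos hne
  have hA0 := auxA_zero Q0 Qs hQ0.2
  have hvar := varFin_eq_auxD Q0 Qs hQ0pos hQ0.2
  have hU' := auxBA_hasDerivAt Q0 Qs hQ0pos hne
  constructor
  · -- part (i)
    set ψ : ℝ → ℝ := fun t => -(t * (auxB Q0 Qs t / auxA Q0 Qs t))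
      - Real.log (auxA Q0 Qs t) - t ^ 2 / 2 * auxD Q0 Qs 0 with hψ
    have hfun0 : (fun lam : ℝ => relEnt (geomMix Q0 Qs lam) Q0 -
        lam ^ 2 / 2 * varFin Q0 (fun y => Real.log (Q0 y / Qs y))) = ψ := by
      funext lam
      rw [relEnt_geomMix_Q0 Q0 Qs hQ0pos hQspos hne lam, hvar, hψ]
    have hψ0 : ψ 0 = 0 := by
      simp [hψ, hA0]
    have hψ' : ∀ t, HasDerivAt ψ (t * (auxD Q0 Qs t - auxD Q0 Qs 0)) t := by
      intro t
      have h1 := ((hasDerivAt_id t).mul (hU' t)).neg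
      have h2 := (auxA_hasDerivAt Q0 Qs t).log (hApos t).ne'
      have h3 : HasDerivAt (fun s : ℝ => s ^ 2 / 2 * auxD Q0 Qs 0)
          (t * auxD Q0 Qs 0) t := by
        have := ((hasDerivAt_pow 2 t).div_const 2).mul_const (auxD Q0 Qs 0)
        exact this.congr_deriv (by simp)
      have h4 := (h1.sub h2).sub h3
      exact h4.congr_deriv (by simp only [id_eq]; ring)
    rw [hfun0, isLittleO_iff]
    intro ε hε
    have hev : ∀ᶠ x in 𝓝 (0:ℝ), |auxD Q0 Qs x - auxD Q0 Qs 0| ≤ ε := by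
      have h5 := auxD_continuousAt Q0 Qs hQ0pos hne
        (Metric.closedBall_mem_nhds (auxD Q0 Qs 0) hε)
      filter_upwards [h5] with x hx
      rwa [Set.mem_preimage, Metric.mem_closedBall, Real.dist_eq] at hx
    obtain ⟨δ, hδpos, hδ⟩ := Metric.eventually_nhds_iff.mp hev
    filter_upwards [Ioo_mem_nhdsGT_of_mem (Set.left_mem_Ico.mpr hδpos)] with lam hlam
    have hbound : ∀ x ∈ Set.Icc (0:ℝ) lam,
        ‖x * (auxD Q0 Qs x - auxD Q0 Qs 0)‖ ≤ ε * lam := by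
      intro x hx
      rw [Real.norm_eq_abs, abs_mul]
      have h6 : |auxD Q0 Qs x - auxD Q0 Qs 0| ≤ ε := by
        apply hδ
        rw [Real.dist_eq, sub_zero, abs_of_nonneg hx.1]
        exact lt_of_le_of_lt hx.2 hlam.2
      have h7 : |x| ≤ lam := by
        rw [abs_of_nonneg hx.1]; exact hx.2
      nlinarith [abs_nonneg x, abs_nonneg (auxD Q0 Qs x - auxD Q0 Qs 0), hε.le, hlam.1.le]
    have hmvt := Convex.norm_image_sub_le_of_norm_hasDerivWithin_le
      (fun x _ => (hψ' x).hasDerivWithinAt) hbound (convex_Icc (0:ℝ) lam)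
      (Set.left_mem_Icc.mpr hlam.1.le) (Set.right_mem_Icc.mpr hlam.1.le)
    rw [hψ0, sub_zero, sub_zero] at hmvt
    show ‖ψ lam‖ ≤ ε * ‖lam ^ 2‖
    have hl : (0:ℝ) < lam := hlam.1
    simp only [Real.norm_eq_abs] at hmvt ⊢
    rw [abs_of_pos hl] at hmvt
    rw [abs_of_pos (pow_pos hl 2)]
    nlinarith
  · -- part (ii)
    have hfunS : (fun lam : ℝ => relEnt (geomMix Q0 Qs lam) Qs)
        = fun lam => (1 - lam) * (auxB Q0 Qs lam / auxA Q0 Qs lam)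
          - Real.log (auxA Q0 Qs lam) := by
      funext lam
      exact relEnt_geomMix_Qs Q0 Qs hQ0pos hQspos hne lam
    rw [hfunS]
    have h1 := ((hasDerivAt_id (0:ℝ)).const_sub 1).mul (hU' 0)
    have h2 := (auxA_hasDerivAt Q0 Qs 0).log (hApos 0).ne'
    have h3 := h1.sub h2
    have h4 : HasDerivAt (fun lam : ℝ => (1 - lam) * (auxB Q0 Qs lam / auxA Q0 Qs lam)
        - Real.log (auxA Q0 Qs lam))
        (-varFin Q0 (fun y => Real.log (Q0 y / Qs y))) 0 := by
      exact h3.congr_deriv (by rw [hvar]; simp only [id_eq]; ring)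
    exact h4.hasDerivWithinAt
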